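/- arXiv:1910.07417 — 12 statements merged into one kernel-verified Lean document; each statement's English description precedes it below -/
import Mathlib

section
/- Fix a > 0 and c ≥ 0. Then ((1−γ)/γ)·(1 + a c/(1−γ))^γ tends to −e^{−a c} as γ → +∞ (note that for γ > 1 + a c the base 1 + a c/(1−γ) = (1 − γ + a c)/(1 − γ) is positive, so the real power is well defined eventually along the filter atTop). -/
open Filter Real

/-- For fixed `a > 0` and `c ≥ 0`,
`((1−γ)/γ)·(1 + a c/(1−γ))^γ → −e^{−a c}` as `γ → +∞`. -/
theorem stmt_3 (a c : ℝ) (ha : 0 < a) (hc : 0 ≤ c) :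
    Filter.Tendsto (fun γ : ℝ => ((1 - γ)/γ) * (1 + a * c/(1 - γ)) ^ γ)
      Filter.atTop (nhds (-Real.exp (-(a * c)))) := by
  have hsub : Tendsto (fun γ : ℝ => γ - 1) atTop atTop :=
    tendsto_atTop_add_const_right _ (-1) tendsto_id
  have hdiv : Tendsto (fun u : ℝ => (-(a*c))/u) atTop (nhds 0) := by
    simpa [div_eq_mul_inv] using tendsto_inv_atTop_zero.const_mul (-(a*c))
  have hbase2 : Tendsto (fun u : ℝ => 1 + (-(a*c))/u) atTop (nhds 1) := by
    have := hdiv.const_add 1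
    simpa using this
  have hbase : Tendsto (fun u : ℝ => (1 + (-(a*c))/u) ^ u * (1 + (-(a*c))/u)) atTop
      (nhds (Real.exp (-(a*c)) * 1)) :=
    (Real.tendsto_one_add_div_rpow_exp (-(a*c))).mul hbase2
  have hpow : Tendsto (fun γ : ℝ => (1 + a * c/(1 - γ)) ^ γ) atTop
      (nhds (Real.exp (-(a*c)))) := by
    have hcomp := (hbase.comp hsub)
    rw [mul_one] at hcomp
    refine hcomp.congr' ?_
    filter_upwards [eventually_gt_atTop (1 + a*c)] with γ hγ
    have hγ1 : (0:ℝ) < γ - 1 := by nlinarith [mul_nonneg ha.le hc]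
    have hb : (0:ℝ) < 1 + (-(a*c))/(γ-1) := by
      have h2 : (-1:ℝ) < (-(a*c))/(γ-1) := by
        rw [lt_div_iff₀ hγ1]; nlinarith
      linarith
    have h1γ : (1:ℝ) - γ ≠ 0 := by linarith
    have hbeq : 1 + a * c/(1 - γ) = 1 + (-(a*c))/(γ-1) := by
      field_simp
      ring
    simp only [Function.comp]
    rw [hbeq, ← Real.rpow_add_one hb.ne', sub_add_cancel]
  have hfrac : Tendsto (fun γ : ℝ => (1 - γ)/γ) atTop (nhds (-1)) := by
    have h1 : Tendsto (fun γ : ℝ => γ⁻¹ - 1) atTop (nhds (0 - 1)) :=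
      tendsto_inv_atTop_zero.sub_const 1
    rw [zero_sub] at h1
    refine h1.congr' ?_
    filter_upwards [eventually_gt_atTop (0:ℝ)] with γ hγ
    field_simp
  have := hfrac.mul hpow
  rw [neg_one_mul] at this
  exact this
end

section
/- Let V : ℝ³ → ℝ solve the EXPn–HJB equation (with an arbitrary positive survival function Φ̄), and let ψ = ψ(h,t) : ℝ² → ℝ be a C² function satisfying the linear parabolic PDE ψ_t + (1/2)η²h²ψ_{hh} + (μ − δ)h ψ_h = 0 at every point. Then the function (l,h,t) ↦ V(l,h,t) + ψ(h,t) also solves the EXPn–HJB equation. -/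
/-- Partial derivative of `V(l,h,t)` in `l`. -/
noncomputable def pdl (V : ℝ → ℝ → ℝ → ℝ) (l h t : ℝ) : ℝ := deriv (fun x => V x h t) l
/-- Partial derivative of `V(l,h,t)` in `h`. -/
noncomputable def pdh (V : ℝ → ℝ → ℝ → ℝ) (l h t : ℝ) : ℝ := deriv (fun y => V l y t) h
/-- Partial derivative of `V(l,h,t)` in `t`. -/
noncomputable def pdt (V : ℝ → ℝ → ℝ → ℝ) (l h t : ℝ) : ℝ := deriv (fun s => V l h s) t
/-- Second partial derivative `V_{ll}`. -/
noncomputable def pdll (V : ℝ → ℝ → ℝ → ℝ) (l h t : ℝ) : ℝ := deriv (fun x => pdl V x h t) l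
/-- Second partial derivative `V_{hh}`. -/
noncomputable def pdhh (V : ℝ → ℝ → ℝ → ℝ) (l h t : ℝ) : ℝ := deriv (fun y => pdh V l y t) h
/-- Mixed partial derivative `V_{lh}`. -/
noncomputable def pdlh (V : ℝ → ℝ → ℝ → ℝ) (l h t : ℝ) : ℝ := deriv (fun y => pdl V l y t) h

/-- `V(l,h,t)` is a (C², `V_l > 0`, `V_{ll} < 0`) solution of the EXPn–HJB equation
with survival function `Φ`. -/
def SolvesEXPn (r σ η a α μ δ ρ : ℝ) (Φ : ℝ → ℝ) (V : ℝ → ℝ → ℝ → ℝ) : Prop :=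
  ContDiff ℝ 2 (fun p : ℝ × ℝ × ℝ => V p.1 p.2.1 p.2.2) ∧
  (∀ l h t : ℝ, 0 < pdl V l h t) ∧
  (∀ l h t : ℝ, pdll V l h t < 0) ∧
  (∀ l h t : ℝ,
    pdt V l h t + (1/2) * η^2 * h^2 * pdhh V l h t + (r * l + δ * h) * pdl V l h t
      + (μ - δ) * h * pdh V l h t
      - ((α - r)^2 * (pdl V l h t)^2
          + 2 * (α - r) * η * ρ * h * pdl V l h t * pdlh V l h t
          + η^2 * ρ^2 * σ^2 * h^2 * (pdlh V l h t)^2) / (2 * σ^2 * pdll V l h t)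
      + (1/a) * pdl V l h t * Real.log (pdl V l h t)
      - (1/a) * (1 + Real.log (Φ t)) * pdl V l h t
      - (Real.log a / a) * pdl V l h t = 0)


private lemma derivDiff {f : ℝ → ℝ} (hf : ContDiff ℝ 2 f) : Differentiable ℝ (deriv f) := by
  have h2 : ContDiff ℝ ((1 : ℕ) + 1) f := by exact_mod_cast hf
  exact ((contDiff_succ_iff_deriv.mp h2).2.2).differentiable (by simp)

/-- Adding to a solution `V` of the EXPn–HJB equation any C²
solution `ψ(h,t)` of `ψ_t + (1/2)η²h²ψ_{hh} + (μ−δ)h ψ_h = 0` gives again a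
solution of the EXPn–HJB equation. -/
theorem stmt_7 (r σ η a α μ δ ρ : ℝ) (hσ : 0 < σ) (ha : 0 < a)
    (Φ : ℝ → ℝ) (hΦ : ∀ t : ℝ, 0 < Φ t)
    (V : ℝ → ℝ → ℝ → ℝ) (hV : SolvesEXPn r σ η a α μ δ ρ Φ V)
    (ψ : ℝ → ℝ → ℝ) (hψC : ContDiff ℝ 2 (fun p : ℝ × ℝ => ψ p.1 p.2))
    (hψ : ∀ h t : ℝ,
      deriv (fun s => ψ h s) t
        + (1/2) * η^2 * h^2 * deriv (fun x => deriv (fun y => ψ y t) x) h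
        + (μ - δ) * h * deriv (fun x => ψ x t) h = 0) :
    SolvesEXPn r σ η a α μ δ ρ Φ (fun l h t => V l h t + ψ h t) := by
  obtain ⟨hC, hpos, hneg, heq⟩ := hV
  have hVh : ∀ l t : ℝ, ContDiff ℝ 2 (fun y => V l y t) := fun l t =>
    hC.comp (contDiff_const.prodMk (contDiff_id.prodMk contDiff_const))
  have hVt : ∀ l h : ℝ, ContDiff ℝ 2 (fun s => V l h s) := fun l h =>
    hC.comp (contDiff_const.prodMk (contDiff_const.prodMk contDiff_id))
  have hψh : ∀ t : ℝ, ContDiff ℝ 2 (fun y => ψ y t) := fun t =>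
    hψC.comp (contDiff_id.prodMk contDiff_const)
  have hψt : ∀ h : ℝ, ContDiff ℝ 2 (fun s => ψ h s) := fun h =>
    hψC.comp (contDiff_const.prodMk contDiff_id)
  have e1 : ∀ l h t : ℝ, pdl (fun l h t => V l h t + ψ h t) l h t = pdl V l h t := by
    intro l h t
    simp only [pdl]
    exact deriv_add_const _
  have e2 : ∀ l h t : ℝ, pdll (fun l h t => V l h t + ψ h t) l h t = pdll V l h t := by
    intro l h t
    simp only [pdll]
    congr 1
    funext x
    exact e1 x h t
  have e3 : ∀ l h t : ℝ, pdlh (fun l h t => V l h t + ψ h t) l h t = pdlh V l h t := by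
    intro l h t
    simp only [pdlh]
    congr 1
    funext y
    exact e1 l y t
  have e4 : ∀ l h t : ℝ, pdh (fun l h t => V l h t + ψ h t) l h t
      = pdh V l h t + deriv (fun x => ψ x t) h := by
    intro l h t
    simp only [pdh]
    exact deriv_add (((hVh l t).differentiable (by simp)) h)
      (((hψh t).differentiable (by simp)) h)
  have e5 : ∀ l h t : ℝ, pdt (fun l h t => V l h t + ψ h t) l h t
      = pdt V l h t + deriv (fun s => ψ h s) t := by
    intro l h t
    simp only [pdt]
    exact deriv_add (((hVt l h).differentiable (by simp)) t)
      (((hψt h).differentiable (by simp)) t)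
  have e6 : ∀ l h t : ℝ, pdhh (fun l h t => V l h t + ψ h t) l h t
      = pdhh V l h t + deriv (fun x => deriv (fun y => ψ y t) x) h := by
    intro l h t
    have hfe : (fun y => pdh (fun l h t => V l h t + ψ h t) l y t)
        = fun y => pdh V l y t + deriv (fun x => ψ x t) y := funext fun y => e4 l y t
    simp only [pdhh, hfe]
    have h1 : DifferentiableAt ℝ (fun y => pdh V l y t) h := by
      have : (fun y => pdh V l y t) = deriv (fun y => V l y t) := by
        funext y; rfl
      rw [this]
      exact derivDiff (hVh l t) h
    exact deriv_add h1 (derivDiff (hψh t) h)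
  refine ⟨hC.add (hψC.comp contDiff_snd), ?_, ?_, ?_⟩
  · intro l h t; rw [e1]; exact hpos l h t
  · intro l h t; rw [e2]; exact hneg l h t
  · intro l h t
    rw [e1, e2, e3, e4, e5, e6]
    linear_combination heq l h t + hψ h t
end

section
/- Let V : ℝ³ → ℝ solve the EXPn–HJB equation (with an arbitrary positive survival function Φ̄). Then for every d ∈ ℝ the function W(l,h,t) := V(l + d·e^{r t}, h, t) also solves the EXPn–HJB equation. (This is the symmetry generated by U₄ = e^{rt} ∂/∂l.) -/
section Aux

variable {V : ℝ → ℝ → ℝ → ℝ} {d r : ℝ}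

private lemma pdl_shift (V : ℝ → ℝ → ℝ → ℝ) (c l h t : ℝ) :
    pdl (fun l h t => V (l + c * Real.exp (r * t)) h t) l h t
      = pdl V (l + c * Real.exp (r * t)) h t := by
  simpa [pdl] using deriv_comp_add_const (fun x => V x h t) (c * Real.exp (r * t)) l

private lemma pdll_shift (V : ℝ → ℝ → ℝ → ℝ) (c l h t : ℝ) :
    pdll (fun l h t => V (l + c * Real.exp (r * t)) h t) l h t
      = pdll V (l + c * Real.exp (r * t)) h t := by
  unfold pdll
  have : (fun x => pdl (fun l h t => V (l + c * Real.exp (r * t)) h t) x h t)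
      = fun x => pdl V (x + c * Real.exp (r * t)) h t := by
    funext x; exact pdl_shift V c x h t
  rw [this]
  simpa using deriv_comp_add_const (fun x => pdl V x h t) (c * Real.exp (r * t)) l

private lemma pdh_shift (V : ℝ → ℝ → ℝ → ℝ) (c l h t : ℝ) :
    pdh (fun l h t => V (l + c * Real.exp (r * t)) h t) l h t
      = pdh V (l + c * Real.exp (r * t)) h t := rfl

private lemma pdhh_shift (V : ℝ → ℝ → ℝ → ℝ) (c l h t : ℝ) :
    pdhh (fun l h t => V (l + c * Real.exp (r * t)) h t) l h t
      = pdhh V (l + c * Real.exp (r * t)) h t := rfl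

private lemma pdlh_shift (V : ℝ → ℝ → ℝ → ℝ) (c l h t : ℝ) :
    pdlh (fun l h t => V (l + c * Real.exp (r * t)) h t) l h t
      = pdlh V (l + c * Real.exp (r * t)) h t := by
  unfold pdlh
  have : (fun y => pdl (fun l h t => V (l + c * Real.exp (r * t)) h t) l y t)
      = fun y => pdl V (l + c * Real.exp (r * t)) y t := by
    funext y; exact pdl_shift V c l y t
  rw [this]

private lemma pdl_eq_fderiv
    (hF : Differentiable ℝ (fun p : ℝ × ℝ × ℝ => V p.1 p.2.1 p.2.2)) (l h t : ℝ) :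
    pdl V l h t
      = fderiv ℝ (fun p : ℝ × ℝ × ℝ => V p.1 p.2.1 p.2.2) (l, h, t) (1, 0, 0) := by
  have hc : HasDerivAt (fun x : ℝ => ((x, h, t) : ℝ × ℝ × ℝ)) (1, 0, 0) l :=
    (hasDerivAt_id l).prodMk ((hasDerivAt_const l h).prodMk (hasDerivAt_const l t))
  exact ((hF (l, h, t)).hasFDerivAt.comp_hasDerivAt l hc).deriv

private lemma pdt_eq_fderiv
    (hF : Differentiable ℝ (fun p : ℝ × ℝ × ℝ => V p.1 p.2.1 p.2.2)) (l h t : ℝ) :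
    pdt V l h t
      = fderiv ℝ (fun p : ℝ × ℝ × ℝ => V p.1 p.2.1 p.2.2) (l, h, t) (0, 0, 1) := by
  have hc : HasDerivAt (fun s : ℝ => ((l, h, s) : ℝ × ℝ × ℝ)) (0, 0, 1) t :=
    (hasDerivAt_const t l).prodMk ((hasDerivAt_const t h).prodMk (hasDerivAt_id t))
  exact ((hF (l, h, t)).hasFDerivAt.comp_hasDerivAt t hc).deriv

private lemma pdt_shift
    (hF : Differentiable ℝ (fun p : ℝ × ℝ × ℝ => V p.1 p.2.1 p.2.2)) (c l h t : ℝ) :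
    pdt (fun l h t => V (l + c * Real.exp (r * t)) h t) l h t
      = pdt V (l + c * Real.exp (r * t)) h t
        + c * r * Real.exp (r * t) * pdl V (l + c * Real.exp (r * t)) h t := by
  set e := c * r * Real.exp (r * t) with he
  set l' := l + c * Real.exp (r * t) with hl'
  have h1 : HasDerivAt (fun s : ℝ => l + c * Real.exp (r * s)) e t := by
    have : HasDerivAt (fun s : ℝ => Real.exp (r * s)) (Real.exp (r * t) * r) t :=
      (Real.hasDerivAt_exp (r * t)).comp t (by simpa using (hasDerivAt_id t).const_mul r)
    have := (this.const_mul c).const_add l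
    exact this.congr_deriv (by rw [he]; ring)
  have hc : HasDerivAt (fun s : ℝ => ((l + c * Real.exp (r * s), h, s) : ℝ × ℝ × ℝ))
      (e, 0, 1) t :=
    h1.prodMk ((hasDerivAt_const t h).prodMk (hasDerivAt_id t))
  have hmain : HasDerivAt (fun s : ℝ => V (l + c * Real.exp (r * s)) h s)
      (fderiv ℝ (fun p : ℝ × ℝ × ℝ => V p.1 p.2.1 p.2.2) (l', h, t) (e, 0, 1)) t :=
    by have := ((hF (l', h, t)).hasFDerivAt.comp_hasDerivAt t hc); exact this
  have hsplit : ((e, 0, 1) : ℝ × ℝ × ℝ) = e • (1, 0, 0) + (0, 0, 1) := by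
    simp [Prod.ext_iff]
  have hval : (fderiv ℝ (fun p : ℝ × ℝ × ℝ => V p.1 p.2.1 p.2.2) (l', h, t)) (e, 0, 1)
      = e * pdl V l' h t + pdt V l' h t := by
    rw [hsplit, map_add, map_smul, pdl_eq_fderiv hF, pdt_eq_fderiv hF]
    simp [smul_eq_mul]
  rw [pdt, hmain.deriv, hval]
  ring

end Aux

/-- If `V` solves the EXPn–HJB equation then for every `d ∈ ℝ` the
shifted function `W(l,h,t) = V(l + d·e^{rt}, h, t)` also solves it (symmetry
generated by `U₄ = e^{rt} ∂/∂l`). -/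
theorem stmt_8 (r σ η a α μ δ ρ : ℝ) (hσ : 0 < σ) (ha : 0 < a)
    (Φ : ℝ → ℝ) (hΦ : ∀ t : ℝ, 0 < Φ t)
    (V : ℝ → ℝ → ℝ → ℝ) (hV : SolvesEXPn r σ η a α μ δ ρ Φ V) (d : ℝ) :
    SolvesEXPn r σ η a α μ δ ρ Φ (fun l h t => V (l + d * Real.exp (r * t)) h t) := by
  obtain ⟨hC2, hpos, hneg, heq⟩ := hV
  have hF : Differentiable ℝ (fun p : ℝ × ℝ × ℝ => V p.1 p.2.1 p.2.2) :=
    hC2.differentiable (by norm_num)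
  refine ⟨?_, ?_, ?_, ?_⟩
  · have hg : ContDiff ℝ 2 (fun p : ℝ × ℝ × ℝ =>
        ((p.1 + d * Real.exp (r * p.2.2), p.2.1, p.2.2) : ℝ × ℝ × ℝ)) := by fun_prop
    exact hC2.comp hg
  · intro l h t
    rw [pdl_shift V d l h t]
    exact hpos _ _ _
  · intro l h t
    rw [pdll_shift V d l h t]
    exact hneg _ _ _
  · intro l h t
    rw [pdl_shift V d l h t, pdll_shift V d l h t, pdh_shift V d l h t,
      pdhh_shift V d l h t, pdlh_shift V d l h t, pdt_shift hF d l h t]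
    have := heq (l + d * Real.exp (r * t)) h t
    linarith [this, mul_comm r l]
end

section
/- Let V : ℝ³ → ℝ solve the EXPn–HJB equation (with an arbitrary positive survival function Φ̄). Then for every ε ∈ ℝ the function W(l,h,t) := e^{−ε}·V(l − ε/(a r), h, t) also solves the EXPn–HJB equation (here r ≠ 0 is assumed). (This is the symmetry generated by U₁ = (1/(ar)) ∂/∂l − V ∂/∂V.) -/
/-- If `V` solves the EXPn–HJB equation (with `r ≠ 0`) then for
every `ε ∈ ℝ` the function `W(l,h,t) = e^{−ε}·V(l − ε/(a r), h, t)` also solves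
it (symmetry generated by `U₁ = (1/(ar)) ∂/∂l − V ∂/∂V`). -/
theorem stmt_9 (r σ η a α μ δ ρ : ℝ) (hσ : 0 < σ) (ha : 0 < a) (hr : r ≠ 0)
    (Φ : ℝ → ℝ) (hΦ : ∀ t : ℝ, 0 < Φ t)
    (V : ℝ → ℝ → ℝ → ℝ) (hV : SolvesEXPn r σ η a α μ δ ρ Φ V) (ε : ℝ) :
    SolvesEXPn r σ η a α μ δ ρ Φ
      (fun l h t => Real.exp (-ε) * V (l - ε / (a * r)) h t) := by

  obtain ⟨hC, hpos, hneg, hpde⟩ := hV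
  set c : ℝ := ε / (a * r) with hc
  set E : ℝ := Real.exp (-ε) with hE
  have hE0 : E ≠ 0 := Real.exp_ne_zero _
  have hl : ∀ l h t : ℝ, pdl (fun l h t => E * V (l - c) h t) l h t
      = E * pdl V (l - c) h t := by
    intro l h t
    simp only [pdl]
    rw [deriv_const_mul_field]
    exact congrArg (E * ·) (deriv_comp_sub_const (fun x => V x h t) c l)
  have hh : ∀ l h t : ℝ, pdh (fun l h t => E * V (l - c) h t) l h t
      = E * pdh V (l - c) h t := by
    intro l h t
    simp only [pdh]
    rw [deriv_const_mul_field]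
  have ht : ∀ l h t : ℝ, pdt (fun l h t => E * V (l - c) h t) l h t
      = E * pdt V (l - c) h t := by
    intro l h t
    simp only [pdt]
    rw [deriv_const_mul_field]
  have hll : ∀ l h t : ℝ, pdll (fun l h t => E * V (l - c) h t) l h t
      = E * pdll V (l - c) h t := by
    intro l h t
    simp only [pdll]
    have h1 : (fun x => pdl (fun l h t => E * V (l - c) h t) x h t)
        = fun x => E * pdl V (x - c) h t := funext fun x => hl x h t
    rw [h1, deriv_const_mul_field]
    exact congrArg (E * ·) (deriv_comp_sub_const (fun x => pdl V x h t) c l)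
  have hhh : ∀ l h t : ℝ, pdhh (fun l h t => E * V (l - c) h t) l h t
      = E * pdhh V (l - c) h t := by
    intro l h t
    simp only [pdhh]
    have h1 : (fun y => pdh (fun l h t => E * V (l - c) h t) l y t)
        = fun y => E * pdh V (l - c) y t := funext fun y => hh l y t
    rw [h1, deriv_const_mul_field]
  have hlh : ∀ l h t : ℝ, pdlh (fun l h t => E * V (l - c) h t) l h t
      = E * pdlh V (l - c) h t := by
    intro l h t
    simp only [pdlh]
    have h1 : (fun y => pdl (fun l h t => E * V (l - c) h t) l y t)
        = fun y => E * pdl V (l - c) y t := funext fun y => hl l y t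
    rw [h1, deriv_const_mul_field]
  refine ⟨?_, ?_, ?_, ?_⟩
  · have h1 : (fun p : ℝ × ℝ × ℝ => E * V (p.1 - c) p.2.1 p.2.2)
        = fun p : ℝ × ℝ × ℝ =>
          E * (fun q : ℝ × ℝ × ℝ => V q.1 q.2.1 q.2.2) (p.1 - c, p.2) := rfl
    rw [h1]
    exact contDiff_const.mul
      (hC.comp (ContDiff.prodMk (contDiff_fst.sub contDiff_const) contDiff_snd))
  · intro l h t
    rw [hl]
    exact mul_pos (Real.exp_pos _) (hpos _ _ _)
  · intro l h t
    rw [hll]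
    exact mul_neg_of_pos_of_neg (Real.exp_pos _) (hneg _ _ _)
  · intro l h t
    rw [hl, hh, ht, hll, hhh, hlh]
    have hpde' := hpde (l - c) h t
    have hD : pdll V (l - c) h t ≠ 0 := ne_of_lt (hneg _ _ _)
    have hlog : Real.log (E * pdl V (l - c) h t)
        = -ε + Real.log (pdl V (l - c) h t) := by
      rw [Real.log_mul hE0 (ne_of_gt (hpos _ _ _)), hE, Real.log_exp]
    rw [hlog]
    have key : ((α - r)^2 * (E * pdl V (l - c) h t)^2
          + 2 * (α - r) * η * ρ * h * (E * pdl V (l - c) h t)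
              * (E * pdlh V (l - c) h t)
          + η^2 * ρ^2 * σ^2 * h^2 * (E * pdlh V (l - c) h t)^2)
          / (2 * σ^2 * (E * pdll V (l - c) h t))
        = E * (((α - r)^2 * (pdl V (l - c) h t)^2
          + 2 * (α - r) * η * ρ * h * pdl V (l - c) h t * pdlh V (l - c) h t
          + η^2 * ρ^2 * σ^2 * h^2 * (pdlh V (l - c) h t)^2)
          / (2 * σ^2 * pdll V (l - c) h t)) := by
      field_simp
    rw [key]
    have hrc : r * c = ε / a := by
      rw [hc]; field_simp
    linear_combination E * hpde' + E * pdl V (l - c) h t * hrc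
end

section
/- Let a > 0, r ≠ 0 and κ ∈ ℝ. Define the vector fields X, Y : ℝ⁴ → ℝ⁴ on ℝ⁴ with coordinates (l, h, t, V) by X(l,h,t,V) = (−κ/(a r²), 0, 1/r, 0) and Y(l,h,t,V) = (e^{r t}, 0, 0, 0). Then the Lie bracket [X, Y](x) = (DY)(x)·X(x) − (DX)(x)·Y(x) equals Y(x) for every x ∈ ℝ⁴. (This is the commutation relation [U₃, U₄] = U₄ of the symmetry algebra L₄^{EXPn} for the exponential liquidation time distribution Φ̄(t) = e^{−κt}.) -/
/-- The Lie bracket of two vector fields on `ℝ⁴ = ℝ × ℝ × ℝ × ℝ`, viewed as maps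
`ℝ⁴ → ℝ⁴`: `[X,Y](x) = (DY)(x)·X(x) − (DX)(x)·Y(x)`. -/
noncomputable def lieBracket4 (X Y : ℝ × ℝ × ℝ × ℝ → ℝ × ℝ × ℝ × ℝ)
    (x : ℝ × ℝ × ℝ × ℝ) : ℝ × ℝ × ℝ × ℝ :=
  fderiv ℝ Y x (X x) - fderiv ℝ X x (Y x)

/-- The projection onto the third coordinate as a continuous linear map. -/
noncomputable def proj3 : (ℝ × ℝ × ℝ × ℝ) →L[ℝ] ℝ :=
  (ContinuousLinearMap.fst ℝ ℝ ℝ).comp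
    ((ContinuousLinearMap.snd ℝ ℝ (ℝ × ℝ)).comp
      (ContinuousLinearMap.snd ℝ ℝ (ℝ × ℝ × ℝ)))

lemma hasFDerivAt_Y (r : ℝ) (x : ℝ × ℝ × ℝ × ℝ) :
    HasFDerivAt (fun p : ℝ × ℝ × ℝ × ℝ => (Real.exp (r * p.2.2.1), (0:ℝ), (0:ℝ), (0:ℝ)))
      (((Real.exp (r * x.2.2.1) * r) • proj3).prod
        ((0 : (ℝ × ℝ × ℝ × ℝ) →L[ℝ] ℝ).prod
          (((0 : (ℝ × ℝ × ℝ × ℝ) →L[ℝ] ℝ)).prod (0 : (ℝ × ℝ × ℝ × ℝ) →L[ℝ] ℝ)))) x := by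
  have h1 : HasDerivAt (fun u : ℝ => Real.exp (r * u)) (Real.exp (r * x.2.2.1) * r) x.2.2.1 := by
    simpa [mul_comm, Function.comp_def] using (Real.hasDerivAt_exp (r * x.2.2.1)).comp x.2.2.1
      ((hasDerivAt_id x.2.2.1).const_mul r)
  have h2 : HasFDerivAt (fun p : ℝ × ℝ × ℝ × ℝ => p.2.2.1) proj3 x := by
    exact proj3.hasFDerivAt (x := x)
  have h3 : HasFDerivAt (fun p : ℝ × ℝ × ℝ × ℝ => Real.exp (r * p.2.2.1))
      ((Real.exp (r * x.2.2.1) * r) • proj3) x := by have := h1.comp_hasFDerivAt x h2; exact this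
  exact h3.prodMk ((hasFDerivAt_const _ _).prodMk
    ((hasFDerivAt_const _ _).prodMk (hasFDerivAt_const _ _)))

/-- With coordinates `(l,h,t,V)` on `ℝ⁴`, the vector fields
`X = (−κ/(a r²), 0, 1/r, 0)` (the generator `U₃` for `Φ̄(t) = e^{−κt}`) and
`Y = (e^{rt}, 0, 0, 0)` (the generator `U₄`) satisfy `[X,Y] = Y`, i.e. the
commutation relation `[U₃,U₄] = U₄` of the symmetry algebra `L₄^{EXPn}`. -/
theorem stmt_12 (a r κ : ℝ) (ha : 0 < a) (hr : r ≠ 0) :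
    ∀ x : ℝ × ℝ × ℝ × ℝ,
      lieBracket4 (fun _ => (-κ/(a*r^2), 0, 1/r, 0))
        (fun p => (Real.exp (r * p.2.2.1), 0, 0, 0)) x
        = (Real.exp (r * x.2.2.1), 0, 0, 0) := by
  intro x
  unfold lieBracket4
  rw [(hasFDerivAt_Y r x).fderiv, fderiv_fun_const]
  simp [proj3, mul_assoc, mul_inv_cancel₀ hr]
end

section
/- Assume r ≠ 0, a > 0, κ > 0 and Φ̄(t) = e^{−κ t}. Let Ṽ : ℝ³ → ℝ solve the EXPn–HJB equation. Then the function V(l,h,t) := Ṽ(l + ln a/(a r), h, t) + e^{−κ t}/(a κ) solves the EXPp–HJB equation. (This is the one-to-one substitution proving that the optimization problems with the negative and positive exponential utility functions are equivalent.) -/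
/-- `V(l,h,t)` is a (C², `V_l > 0`, `V_{ll} < 0`) solution of the EXPp–HJB equation
with survival function `Φ`. -/
def SolvesEXPp (r σ η a α μ δ ρ : ℝ) (Φ : ℝ → ℝ) (V : ℝ → ℝ → ℝ → ℝ) : Prop :=
  ContDiff ℝ 2 (fun p : ℝ × ℝ × ℝ => V p.1 p.2.1 p.2.2) ∧
  (∀ l h t : ℝ, 0 < pdl V l h t) ∧
  (∀ l h t : ℝ, pdll V l h t < 0) ∧
  (∀ l h t : ℝ,
    pdt V l h t + (1/2) * η^2 * h^2 * pdhh V l h t + (r * l + δ * h) * pdl V l h t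
      + (μ - δ) * h * pdh V l h t
      - ((α - r)^2 * (pdl V l h t)^2
          + 2 * (α - r) * η * ρ * h * pdl V l h t * pdlh V l h t
          + η^2 * ρ^2 * σ^2 * h^2 * (pdlh V l h t)^2) / (2 * σ^2 * pdll V l h t)
      + (1/a) * pdl V l h t * Real.log (pdl V l h t)
      - (1/a) * (1 + Real.log (Φ t)) * pdl V l h t
      + Φ t / a = 0)

/-- For `Φ̄(t) = e^{−κt}` (`κ > 0`, `r ≠ 0`, `a > 0`): if `Ṽ`
solves the EXPn–HJB equation, then
`V(l,h,t) = Ṽ(l + ln a/(a r), h, t) + e^{−κ t}/(a κ)` solves the EXPp–HJB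
equation — the one-to-one substitution showing that the optimization problems
with the negative and positive exponential utility functions are equivalent. -/
theorem stmt_13 (r σ η a α μ δ ρ κ : ℝ) (hσ : 0 < σ) (ha : 0 < a) (hr : r ≠ 0)
    (hκ : 0 < κ)
    (V : ℝ → ℝ → ℝ → ℝ)
    (hV : SolvesEXPn r σ η a α μ δ ρ (fun t => Real.exp (-(κ * t))) V) :
    SolvesEXPp r σ η a α μ δ ρ (fun t => Real.exp (-(κ * t)))
      (fun l h t => V (l + Real.log a / (a * r)) h t + Real.exp (-(κ * t)) / (a * κ)) := by
  obtain ⟨hc2, hpos, hneg, heq⟩ := hV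
  have hd : Differentiable ℝ (fun p : ℝ × ℝ × ℝ => V p.1 p.2.1 p.2.2) :=
    hc2.differentiable (by norm_num)
  set c : ℝ := Real.log a / (a * r) with hc
  set W : ℝ → ℝ → ℝ → ℝ :=
    fun l h t => V (l + c) h t + Real.exp (-(κ * t)) / (a * κ) with hW
  have hWl : ∀ l h t : ℝ, pdl W l h t = pdl V (l + c) h t := by
    intro l h t
    show deriv (fun x => V (x + c) h t + Real.exp (-(κ * t)) / (a * κ)) l
        = deriv (fun x => V x h t) (l + c)
    rw [deriv_add_const]
    exact deriv_comp_add_const (fun x => V x h t) c l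
  have hWh : ∀ l h t : ℝ, pdh W l h t = pdh V (l + c) h t := by
    intro l h t
    show deriv (fun y => V (l + c) y t + Real.exp (-(κ * t)) / (a * κ)) h
        = deriv (fun y => V (l + c) y t) h
    rw [deriv_add_const]
  have hWll : ∀ l h t : ℝ, pdll W l h t = pdll V (l + c) h t := by
    intro l h t
    show deriv (fun x => pdl W x h t) l = deriv (fun x => pdl V x h t) (l + c)
    simp only [hWl]
    exact deriv_comp_add_const (fun x => pdl V x h t) c l
  have hWhh : ∀ l h t : ℝ, pdhh W l h t = pdhh V (l + c) h t := by
    intro l h t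
    show deriv (fun y => pdh W l y t) h = deriv (fun y => pdh V (l + c) y t) h
    simp only [hWh]
  have hWlh : ∀ l h t : ℝ, pdlh W l h t = pdlh V (l + c) h t := by
    intro l h t
    show deriv (fun y => pdl W l y t) h = deriv (fun y => pdl V (l + c) y t) h
    simp only [hWl]
  have hWt : ∀ l h t : ℝ, pdt W l h t = pdt V (l + c) h t - Real.exp (-(κ * t)) / a := by
    intro l h t
    have h1 : HasDerivAt (fun s : ℝ => Real.exp (-(κ * s)) / (a * κ))
        (Real.exp (-(κ * t)) * (-κ) / (a * κ)) t := by
      have hlin : HasDerivAt (fun s : ℝ => -(κ * s)) (-κ) t := by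
        simpa using ((hasDerivAt_id t).const_mul κ).fun_neg
      exact ((Real.hasDerivAt_exp _).comp t hlin).div_const _
    have h2 : DifferentiableAt ℝ (fun s => V (l + c) h s) t :=
      (hd.comp (((differentiable_const (l + c)).prodMk
        ((differentiable_const h).prodMk differentiable_id)))) t
    show deriv (fun s => V (l + c) h s + Real.exp (-(κ * s)) / (a * κ)) t
        = deriv (fun s => V (l + c) h s) t - Real.exp (-(κ * t)) / a
    rw [deriv_fun_add h2 h1.differentiableAt, h1.deriv]
    have : Real.exp (-(κ * t)) * (-κ) / (a * κ) = -(Real.exp (-(κ * t)) / a) := by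
      field_simp
    rw [this]; ring
  refine ⟨?_, ?_, ?_, ?_⟩
  · have g1 : ContDiff ℝ 2 (fun p : ℝ × ℝ × ℝ => V (p.1 + c) p.2.1 p.2.2) := by
      exact hc2.comp ((contDiff_fst.add contDiff_const).prodMk contDiff_snd)
    have g2 : ContDiff ℝ 2 (fun p : ℝ × ℝ × ℝ => Real.exp (-(κ * p.2.2)) / (a * κ)) := by
      exact (Real.contDiff_exp.comp ((contDiff_const.mul
        (contDiff_snd.comp contDiff_snd)).neg)).div_const _
    exact g1.add g2
  · intro l h t
    rw [hWl]; exact hpos _ _ _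
  · intro l h t
    rw [hWll]; exact hneg _ _ _
  · intro l h t
    rw [hWl, hWh, hWt, hWll, hWhh, hWlh]
    have hrc : r * c = Real.log a / a := by
      rw [hc]; field_simp
    simp only []
    linear_combination heq (l + c) h t - pdl V (l + c) h t * hrc
end

section
/- Assume 0 < γ < 1, a > 0, r ≠ 0, κ > 0 and Φ̄(t) = e^{−κ t}. Let Ṽ : ℝ³ → ℝ solve the HARA₁–HJB equation. Then the function V(l,h,t) := Ṽ(l − (1−γ)/(a r), h, t) + ((1−γ)/(γ κ))·e^{−κ t} solves the HARA₂–HJB equation. (This is the substitution l̃ = l − (1−γ)/(ar), Ṽ = V + ((1−γ)/γ)∫Φ̄(t)dt, showing the two forms of the HARA optimization problem are equivalent.) -/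
/-- `V(l,h,t)` is a (C², `V_l > 0`, `V_{ll} < 0`) solution of the HARA₁–HJB
equation (HARA utility in the first form) with survival function `Φ`. -/
def SolvesHARA1 (r σ η a α μ δ ρ γ : ℝ) (Φ : ℝ → ℝ) (V : ℝ → ℝ → ℝ → ℝ) : Prop :=
  ContDiff ℝ 2 (fun p : ℝ × ℝ × ℝ => V p.1 p.2.1 p.2.2) ∧
  (∀ l h t : ℝ, 0 < pdl V l h t) ∧
  (∀ l h t : ℝ, pdll V l h t < 0) ∧
  (∀ l h t : ℝ,
    pdt V l h t + (1/2) * η^2 * h^2 * pdhh V l h t + (r * l + δ * h) * pdl V l h t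
      + (μ - δ) * h * pdh V l h t
      - ((α - r)^2 * (pdl V l h t)^2
          + 2 * (α - r) * η * ρ * h * pdl V l h t * pdlh V l h t
          + η^2 * ρ^2 * σ^2 * h^2 * (pdlh V l h t)^2) / (2 * σ^2 * pdll V l h t)
      + ((1 - γ)^2 / γ) * (Φ t) ^ (1/(1 - γ)) * (pdl V l h t) ^ (-γ/(1 - γ))
      - ((1 - γ)/γ) * Φ t = 0)

/-- `V(l,h,t)` is a (C², `V_l > 0`, `V_{ll} < 0`) solution of the HARA₂–HJB
equation (HARA utility in the second form) with survival function `Φ`. -/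
def SolvesHARA2 (r σ η a α μ δ ρ γ : ℝ) (Φ : ℝ → ℝ) (V : ℝ → ℝ → ℝ → ℝ) : Prop :=
  ContDiff ℝ 2 (fun p : ℝ × ℝ × ℝ => V p.1 p.2.1 p.2.2) ∧
  (∀ l h t : ℝ, 0 < pdl V l h t) ∧
  (∀ l h t : ℝ, pdll V l h t < 0) ∧
  (∀ l h t : ℝ,
    pdt V l h t + (1/2) * η^2 * h^2 * pdhh V l h t + (r * l + δ * h) * pdl V l h t
      + (μ - δ) * h * pdh V l h t
      - ((α - r)^2 * (pdl V l h t)^2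
          + 2 * (α - r) * η * ρ * h * pdl V l h t * pdlh V l h t
          + η^2 * ρ^2 * σ^2 * h^2 * (pdlh V l h t)^2) / (2 * σ^2 * pdll V l h t)
      + ((1 - γ)^2 / γ) * (Φ t) ^ (1/(1 - γ)) * (pdl V l h t) ^ (-γ/(1 - γ))
      - ((1 - γ)/a) * pdl V l h t = 0)

/-- For `Φ̄(t) = e^{−κt}` (`0 < γ < 1`, `a > 0`, `r ≠ 0`, `κ > 0`):
if `Ṽ` solves the HARA₁–HJB equation, then
`V(l,h,t) = Ṽ(l − (1−γ)/(a r), h, t) + ((1−γ)/(γκ))·e^{−κt}` solves the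
HARA₂–HJB equation — the substitution showing that the two forms of the HARA
optimization problem are equivalent. -/
theorem stmt_14 (r σ η a α μ δ ρ κ γ : ℝ) (hσ : 0 < σ) (ha : 0 < a) (hr : r ≠ 0)
    (hκ : 0 < κ) (hγ0 : 0 < γ) (hγ1 : γ < 1)
    (V : ℝ → ℝ → ℝ → ℝ)
    (hV : SolvesHARA1 r σ η a α μ δ ρ γ (fun t => Real.exp (-(κ * t))) V) :
    SolvesHARA2 r σ η a α μ δ ρ γ (fun t => Real.exp (-(κ * t)))
      (fun l h t => V (l - (1 - γ) / (a * r)) h t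
        + ((1 - γ)/(γ * κ)) * Real.exp (-(κ * t))) := by
  obtain ⟨hC, hpos, hneg, heq⟩ := hV
  set c : ℝ := (1 - γ) / (a * r) with hc
  set A : ℝ := (1 - γ) / (γ * κ) with hA
  set W : ℝ → ℝ → ℝ → ℝ := fun l h t => V (l - c) h t + A * Real.exp (-(κ * t)) with hW
  -- differentiability of the t-slice of V
  have hdt : ∀ l h t : ℝ, DifferentiableAt ℝ (fun s => V l h s) t := by
    intro l h t
    have h1 : Differentiable ℝ (fun p : ℝ × ℝ × ℝ => V p.1 p.2.1 p.2.2) :=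
      hC.differentiable (by norm_num)
    have h2 : Differentiable ℝ (fun s : ℝ => ((l, h, s) : ℝ × ℝ × ℝ)) :=
      (differentiable_const l).prodMk ((differentiable_const h).prodMk differentiable_id)
    exact (h1.comp h2).differentiableAt
  -- partial derivative computations
  have hpdl : ∀ l h t : ℝ, pdl W l h t = pdl V (l - c) h t := by
    intro l h t
    simp only [pdl, hW, deriv_add_const]
    exact deriv_comp_sub_const (fun x => V x h t) c l
  have hpdh : ∀ l h t : ℝ, pdh W l h t = pdh V (l - c) h t := by
    intro l h t
    simp only [pdh, hW, deriv_add_const]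
  have hpdll : ∀ l h t : ℝ, pdll W l h t = pdll V (l - c) h t := by
    intro l h t
    have : (fun x => pdl W x h t) = (fun x => pdl V (x - c) h t) := by
      funext x; exact hpdl x h t
    simp only [pdll, this]
    exact deriv_comp_sub_const (fun x => pdl V x h t) c l
  have hpdhh : ∀ l h t : ℝ, pdhh W l h t = pdhh V (l - c) h t := by
    intro l h t
    have : (fun y => pdh W l y t) = (fun y => pdh V (l - c) y t) := by
      funext y; exact hpdh l y t
    simp only [pdhh, this]
  have hpdlh : ∀ l h t : ℝ, pdlh W l h t = pdlh V (l - c) h t := by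
    intro l h t
    have : (fun y => pdl W l y t) = (fun y => pdl V (l - c) y t) := by
      funext y; exact hpdl l y t
    simp only [pdlh, this]
  have hpdt : ∀ l h t : ℝ, pdt W l h t = pdt V (l - c) h t - ((1 - γ)/γ) * Real.exp (-(κ * t)) := by
    intro l h t
    have hexp : HasDerivAt (fun s : ℝ => A * Real.exp (-(κ * s)))
        (A * (Real.exp (-(κ * t)) * (-(κ * 1)))) t :=
      (((hasDerivAt_id t).const_mul κ).neg.exp).const_mul A
    have hVt : HasDerivAt (fun s => V (l - c) h s) (pdt V (l - c) h t) t :=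
      (hdt (l - c) h t).hasDerivAt
    have key : pdt W l h t = pdt V (l - c) h t + A * (Real.exp (-(κ * t)) * -(κ * 1)) := by
      simpa [pdt, hW, Pi.add_def] using (hVt.add hexp).deriv
    rw [key, hA]
    have hγ : γ ≠ 0 := ne_of_gt hγ0
    have hκ' : κ ≠ 0 := ne_of_gt hκ
    field_simp
    ring
  -- smoothness of W
  have hCW : ContDiff ℝ 2 (fun p : ℝ × ℝ × ℝ => W p.1 p.2.1 p.2.2) := by
    have hG : ContDiff ℝ 2 (fun p : ℝ × ℝ × ℝ => ((p.1 - c, p.2.1, p.2.2) : ℝ × ℝ × ℝ)) :=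
      (contDiff_fst.sub contDiff_const).prodMk ((contDiff_fst.comp contDiff_snd).prodMk
        (contDiff_snd.comp contDiff_snd))
    have h1 : ContDiff ℝ 2 (fun p : ℝ × ℝ × ℝ => V (p.1 - c) p.2.1 p.2.2) := hC.comp hG
    have h2 : ContDiff ℝ 2 (fun p : ℝ × ℝ × ℝ => A * Real.exp (-(κ * p.2.2))) := by
      have : ContDiff ℝ 2 (fun p : ℝ × ℝ × ℝ => -(κ * p.2.2)) :=
        (contDiff_const.mul (contDiff_snd.comp contDiff_snd)).neg
      exact contDiff_const.mul ((Real.contDiff_exp.of_le le_top).comp this)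
    exact h1.add h2
  refine ⟨hCW, ?_, ?_, ?_⟩
  · intro l h t; rw [hpdl]; exact hpos _ _ _
  · intro l h t; rw [hpdll]; exact hneg _ _ _
  · intro l h t
    have H := heq (l - c) h t
    have hrc : r * c = (1 - γ) / a := by
      rw [hc]; field_simp
    rw [hpdt, hpdl, hpdh, hpdll, hpdhh, hpdlh]
    simp only at H ⊢
    have hl : r * l = r * (l - c) + (1 - γ) / a := by
      rw [← hrc]; ring
    linear_combination H + (pdl V (l - c) h t) * hl
end

section
/- Assume r ≠ 0, a > 0, κ > 0 and Φ̄(t) = e^{−κ t}. Let W = W(z,h) : ℝ² → ℝ be a C² function with W_z > 0 and W_{zz} < 0 everywhere, satisfying at every point the two dimensional PDE (1/2)η²h²W_{hh} + (μ−δ)h W_h + (r z + δ h)W_z + (1/a)W_z ln W_z − ((α−r)²W_z² + 2(α−r)ηρh W_z W_{zh} + η²ρ²σ²h²W_{zh}²)/(2σ²W_{zz}) = 0. Then V(l,h,t) := W(l + κ t/(a r) + (1/(a r))(κ/r − 1 − ln a), h) solves the EXPn–HJB equation. (This is the invariant reduction corresponding to the subalgebra h₂ = ⟨e₃⟩.)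 -/
/-- Partial derivative of `W(z,h)` in `z`. -/
noncomputable def qdz (W : ℝ → ℝ → ℝ) (z h : ℝ) : ℝ := deriv (fun x => W x h) z
/-- Partial derivative of `W(z,h)` in `h`. -/
noncomputable def qdh (W : ℝ → ℝ → ℝ) (z h : ℝ) : ℝ := deriv (fun y => W z y) h
/-- Second partial derivative `W_{zz}`. -/
noncomputable def qdzz (W : ℝ → ℝ → ℝ) (z h : ℝ) : ℝ := deriv (fun x => qdz W x h) z
/-- Second partial derivative `W_{hh}`. -/
noncomputable def qdhh (W : ℝ → ℝ → ℝ) (z h : ℝ) : ℝ := deriv (fun y => qdh W z y) h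
/-- Mixed partial derivative `W_{zh}`. -/
noncomputable def qdzh (W : ℝ → ℝ → ℝ) (z h : ℝ) : ℝ := deriv (fun y => qdz W z y) h

/-- (invariant reduction for the subalgebra `h₂ = ⟨e₃⟩`,
exponential liquidation time `Φ̄(t) = e^{−κt}`). If `W(z,h)` is C² with
`W_z > 0`, `W_{zz} < 0`, and solves
`(1/2)η²h²W_{hh} + (μ−δ)hW_h + (rz+δh)W_z + (1/a)W_z ln W_z
 − ((α−r)²W_z² + 2(α−r)ηρh W_z W_{zh} + η²ρ²σ²h²W_{zh}²)/(2σ²W_{zz}) = 0`,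
then `V(l,h,t) = W(l + κt/(ar) + (1/(ar))(κ/r − 1 − ln a), h)` solves the
EXPn–HJB equation. -/
theorem stmt_15 (r σ η a α μ δ ρ κ : ℝ) (hσ : 0 < σ) (ha : 0 < a) (hr : r ≠ 0)
    (hκ : 0 < κ)
    (W : ℝ → ℝ → ℝ) (hWC : ContDiff ℝ 2 (fun p : ℝ × ℝ => W p.1 p.2))
    (hWz : ∀ z h : ℝ, 0 < qdz W z h) (hWzz : ∀ z h : ℝ, qdzz W z h < 0)
    (hW : ∀ z h : ℝ,
      (1/2) * η^2 * h^2 * qdhh W z h + (μ - δ) * h * qdh W z h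
        + (r * z + δ * h) * qdz W z h
        + (1/a) * qdz W z h * Real.log (qdz W z h)
        - ((α - r)^2 * (qdz W z h)^2
            + 2 * (α - r) * η * ρ * h * qdz W z h * qdzh W z h
            + η^2 * ρ^2 * σ^2 * h^2 * (qdzh W z h)^2) / (2 * σ^2 * qdzz W z h)
        = 0) :
    SolvesEXPn r σ η a α μ δ ρ (fun t => Real.exp (-(κ * t)))
      (fun l h t =>
        W (l + κ * t / (a * r) + (1/(a * r)) * (κ/r - 1 - Real.log a)) h) := by
  set c : ℝ := (1/(a * r)) * (κ/r - 1 - Real.log a) with hc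
  set V : ℝ → ℝ → ℝ → ℝ := fun l h t => W (l + κ * t / (a * r) + c) h with hV
  have hWd : Differentiable ℝ (fun p : ℝ × ℝ => W p.1 p.2) :=
    hWC.differentiable (by norm_num)
  have hf : ∀ h : ℝ, Differentiable ℝ (fun x => W x h) := by
    intro h
    exact hWd.comp (differentiable_id.prodMk (differentiable_const h))
  -- first derivatives
  have hpdl : ∀ l h t : ℝ, pdl V l h t = qdz W (l + κ * t / (a * r) + c) h := by
    intro l h t
    have : (fun x => V x h t) = (fun x => W (x + (κ * t / (a * r) + c)) h) := by
      funext x; simp [hV, add_assoc]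
    rw [pdl, this, deriv_comp_add_const (fun x => W x h) _ l, ← add_assoc]
    rfl
  have hpdt : ∀ l h t : ℝ, pdt V l h t = qdz W (l + κ * t / (a * r) + c) h * (κ / (a * r)) := by
    intro l h t
    have hg : HasDerivAt (fun s : ℝ => l + κ * s / (a * r) + c) (κ / (a * r)) t := by
      have h1 : HasDerivAt (fun s : ℝ => κ * s / (a * r)) (κ / (a * r)) t := by
        simpa using ((hasDerivAt_id t).const_mul κ).div_const (a * r)
      simpa using (h1.const_add l).add_const c
    have hF : HasDerivAt (fun x => W x h) (qdz W (l + κ * t / (a * r) + c) h)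
        (l + κ * t / (a * r) + c) := (hf h _).hasDerivAt
    have := (hF.comp t hg).deriv
    simpa [pdt, hV, Function.comp_def] using this
  have hpdh : ∀ l h t : ℝ, pdh V l h t = qdh W (l + κ * t / (a * r) + c) h := by
    intro l h t; rfl
  -- second derivatives
  have hpdll : ∀ l h t : ℝ, pdll V l h t = qdzz W (l + κ * t / (a * r) + c) h := by
    intro l h t
    have : (fun x => pdl V x h t) = (fun x => qdz W (x + (κ * t / (a * r) + c)) h) := by
      funext x; rw [hpdl x h t, add_assoc]
    rw [pdll, this, deriv_comp_add_const (fun x => qdz W x h) _ l, ← add_assoc]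
    rfl
  have hpdlh : ∀ l h t : ℝ, pdlh V l h t = qdzh W (l + κ * t / (a * r) + c) h := by
    intro l h t
    have : (fun y => pdl V l y t) = (fun y => qdz W (l + κ * t / (a * r) + c) y) := by
      funext y; rw [hpdl l y t]
    rw [pdlh, this]; rfl
  have hpdhh : ∀ l h t : ℝ, pdhh V l h t = qdhh W (l + κ * t / (a * r) + c) h := by
    intro l h t; rfl
  refine ⟨?_, ?_, ?_, ?_⟩
  · have hmap : ContDiff ℝ 2 (fun p : ℝ × ℝ × ℝ =>
        ((p.1 + κ * p.2.2 / (a * r) + c, p.2.1) : ℝ × ℝ)) := by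
      have har : a * r ≠ 0 := mul_ne_zero (ne_of_gt ha) hr
      fun_prop (disch := intros; exact har)
    exact hWC.comp hmap
  · intro l h t; rw [hpdl]; exact hWz _ _
  · intro l h t; rw [hpdll]; exact hWzz _ _
  · intro l h t
    set z : ℝ := l + κ * t / (a * r) + c with hz
    have key := hW z h
    rw [hpdl, hpdt, hpdh, hpdll, hpdlh, hpdhh, ← hz, Real.log_exp]
    have hrz : r * z = r * l + κ * t / a + κ / (a * r) - 1 / a - Real.log a / a := by
      rw [hz, hc]; field_simp; ring
    linear_combination key - qdz W z h * hrz
end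

section
/- Assume r ≠ 0, a > 0, κ > 0, ω ≠ 0 and Φ̄(t) = e^{−κ t}. Let W = W(z,h) : ℝ² → ℝ be a C² function with W_z > 0 and W_{zz} < 0 everywhere, satisfying at every point the two dimensional PDE (1/2)η²h²W_{hh} + (μ−δ)h W_h + (r z + δ h)W_z + (1/a)W_z ln W_z − ((α−r)²W_z² + 2(α−r)ηρh W_z W_{zh} + η²ρ²σ²h²W_{zh}²)/(2σ²W_{zz}) − (1/a)(1/ω + 1 + ln a)W_z − (r/ω)W = 0. Then V(l,h,t) := e^{−r t/ω}·W(l + ((κ ω − r)/(a r ω))·t + κ/(a r²), h) solves the EXPn–HJB equation. (This is the invariant reduction corresponding to the subalgebra h₄ = ⟨e₁ + ω e₃⟩, ω ≠ 0; it is the unique symmetry reduction of the main HJB equation consistent with the boundary condition of the optimization problem.) -/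
/-- (invariant reduction for the subalgebra `h₄ = ⟨e₁ + ω e₃⟩`,
`ω ≠ 0`, exponential liquidation time `Φ̄(t) = e^{−κt}`; the unique symmetry
reduction consistent with the boundary condition). If `W(z,h)` is C² with
`W_z > 0`, `W_{zz} < 0`, and solves
`(1/2)η²h²W_{hh} + (μ−δ)hW_h + (rz+δh)W_z + (1/a)W_z ln W_z
 − ((α−r)²W_z² + 2(α−r)ηρh W_z W_{zh} + η²ρ²σ²h²W_{zh}²)/(2σ²W_{zz})
 − (1/a)(1/ω + 1 + ln a)W_z − (r/ω)W = 0`,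
then `V(l,h,t) = e^{−rt/ω}·W(l + ((κω−r)/(arω))t + κ/(ar²), h)` solves the
EXPn–HJB equation. -/
theorem stmt_16 (r σ η a α μ δ ρ κ ω : ℝ) (hσ : 0 < σ) (ha : 0 < a) (hr : r ≠ 0)
    (hκ : 0 < κ) (hω : ω ≠ 0)
    (W : ℝ → ℝ → ℝ) (hWC : ContDiff ℝ 2 (fun p : ℝ × ℝ => W p.1 p.2))
    (hWz : ∀ z h : ℝ, 0 < qdz W z h) (hWzz : ∀ z h : ℝ, qdzz W z h < 0)
    (hW : ∀ z h : ℝ,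
      (1/2) * η^2 * h^2 * qdhh W z h + (μ - δ) * h * qdh W z h
        + (r * z + δ * h) * qdz W z h
        + (1/a) * qdz W z h * Real.log (qdz W z h)
        - ((α - r)^2 * (qdz W z h)^2
            + 2 * (α - r) * η * ρ * h * qdz W z h * qdzh W z h
            + η^2 * ρ^2 * σ^2 * h^2 * (qdzh W z h)^2) / (2 * σ^2 * qdzz W z h)
        - (1/a) * (1/ω + 1 + Real.log a) * qdz W z h
        - (r/ω) * W z h = 0) :
    SolvesEXPn r σ η a α μ δ ρ (fun t => Real.exp (-(κ * t)))
      (fun l h t =>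
        Real.exp (-(r * t / ω)) *
          W (l + ((κ * ω - r)/(a * r * ω)) * t + κ/(a * r^2)) h) := by

  set c : ℝ := (κ * ω - r) / (a * r * ω) with hcdef
  set d : ℝ := κ / (a * r ^ 2) with hddef
  have h12 : ((1:WithTop ℕ∞) + 1) ≤ 2 := by norm_num
  have hFd : Differentiable ℝ (fun p : ℝ × ℝ => W p.1 p.2) := hWC.differentiable (by norm_num)
  set g1 : ℝ × ℝ → ℝ := fun p => fderiv ℝ (fun p : ℝ × ℝ => W p.1 p.2) p (1, 0) with hg1def
  set g2 : ℝ × ℝ → ℝ := fun p => fderiv ℝ (fun p : ℝ × ℝ => W p.1 p.2) p (0, 1) with hg2def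
  have hg1 : ContDiff ℝ 1 g1 := (hWC.fderiv_right h12).clm_apply contDiff_const
  have hg2 : ContDiff ℝ 1 g2 := (hWC.fderiv_right h12).clm_apply contDiff_const
  have hdz : ∀ z h : ℝ, HasDerivAt (fun x => W x h) (g1 (z, h)) z := fun z h =>
    by have := (hFd (z, h)).hasFDerivAt.comp_hasDerivAt z (HasDerivAt.prodMk (hasDerivAt_id z) (hasDerivAt_const z h)); exact this
  have hdh : ∀ z h : ℝ, HasDerivAt (fun y => W z y) (g2 (z, h)) h := fun z h =>
    by have := (hFd (z, h)).hasFDerivAt.comp_hasDerivAt h (HasDerivAt.prodMk (hasDerivAt_const h z) (hasDerivAt_id h)); exact this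
  have hqz : ∀ z h : ℝ, qdz W z h = g1 (z, h) := fun z h => (hdz z h).deriv
  have hqh : ∀ z h : ℝ, qdh W z h = g2 (z, h) := fun z h => (hdh z h).deriv
  have hqzfun : ∀ h : ℝ, (fun x => qdz W x h) = fun x => g1 (x, h) := fun h =>
    funext fun x => hqz x h
  have hqhfun : ∀ z : ℝ, (fun y => qdh W z y) = fun y => g2 (z, y) := fun z =>
    funext fun y => hqh z y
  have hqzfun2 : ∀ z : ℝ, (fun y => qdz W z y) = fun y => g1 (z, y) := fun z =>
    funext fun y => hqz z y
  -- the basic partial derivative computations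
  have hpdl : ∀ l h t : ℝ, pdl (fun l h t => Real.exp (-(r * t / ω)) * W (l + c * t + d) h) l h t
      = Real.exp (-(r * t / ω)) * qdz W (l + c * t + d) h := by
    intro l h t
    have hx : HasDerivAt (fun x : ℝ => x + c * t + d) 1 l := by
      simpa using (((hasDerivAt_id l).add_const (c * t)).add_const d)
    have hD : HasDerivAt (fun x => Real.exp (-(r * t / ω)) * W (x + c * t + d) h)
        (Real.exp (-(r * t / ω)) * (g1 (l + c * t + d, h) * 1)) l :=
      ((hdz (l + c * t + d) h).comp l hx).const_mul _
    rw [hqz]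
    have := hD.deriv
    rw [mul_one] at this
    exact this
  have hpdh : ∀ l h t : ℝ, pdh (fun l h t => Real.exp (-(r * t / ω)) * W (l + c * t + d) h) l h t
      = Real.exp (-(r * t / ω)) * qdh W (l + c * t + d) h := by
    intro l h t
    have hD : HasDerivAt (fun y => Real.exp (-(r * t / ω)) * W (l + c * t + d) y)
        (Real.exp (-(r * t / ω)) * g2 (l + c * t + d, h)) h :=
      (hdh (l + c * t + d) h).const_mul _
    rw [hqh]
    exact hD.deriv
  have hpdt : ∀ l h t : ℝ, pdt (fun l h t => Real.exp (-(r * t / ω)) * W (l + c * t + d) h) l h t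
      = -(r / ω) * Real.exp (-(r * t / ω)) * W (l + c * t + d) h
        + Real.exp (-(r * t / ω)) * (c * qdz W (l + c * t + d) h) := by
    intro l h t
    have h0 : HasDerivAt (fun s : ℝ => -(r * s / ω)) (-(r / ω)) t := by
      have := (((hasDerivAt_id' t).const_mul r).div_const ω).neg; simp only [mul_one] at this; exact this
    have hE : HasDerivAt (fun s : ℝ => Real.exp (-(r * s / ω)))
        (Real.exp (-(r * t / ω)) * -(r / ω)) t := h0.exp
    have haff : HasDerivAt (fun s : ℝ => l + c * s + d) c t := by
      simpa using ((((hasDerivAt_id t).const_mul c).const_add l).add_const d)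
    have hWt : HasDerivAt (fun s : ℝ => W (l + c * s + d) h)
        (g1 (l + c * t + d, h) * c) t := by have := (hdz (l + c * t + d) h).comp t haff; exact this
    have hD := hE.mul hWt
    rw [hqz]
    have := hD.deriv
    show deriv (fun s => Real.exp (-(r * s / ω)) * W (l + c * s + d) h) t = _
    rw [show (fun s => Real.exp (-(r * s / ω)) * W (l + c * s + d) h) = ((fun s => Real.exp (-(r * s / ω))) * fun s => W (l + c * s + d) h) from rfl, this]; ring
  have hpdll : ∀ l h t : ℝ, pdll (fun l h t => Real.exp (-(r * t / ω)) * W (l + c * t + d) h) l h t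
      = Real.exp (-(r * t / ω)) * qdzz W (l + c * t + d) h := by
    intro l h t
    have hfun : (fun x => pdl (fun l h t => Real.exp (-(r * t / ω)) * W (l + c * t + d) h) x h t)
        = fun x => Real.exp (-(r * t / ω)) * g1 (x + (c * t + d), h) := by
      funext x
      rw [hpdl x h t, hqz, add_assoc]
    have hshift : deriv (fun x : ℝ => g1 (x + (c * t + d), h)) l
        = deriv (fun u => g1 (u, h)) (l + (c * t + d)) :=
      deriv_comp_add_const (fun u => g1 (u, h)) _ _
    show deriv (fun x => pdl (fun l h t => Real.exp (-(r * t / ω)) * W (l + c * t + d) h) x h t) l = _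
    rw [hfun, deriv_const_mul_field, hshift]
    have : qdzz W (l + c * t + d) h = deriv (fun u => g1 (u, h)) (l + (c * t + d)) := by
      show deriv (fun x => qdz W x h) (l + c * t + d) = _
      rw [hqzfun h, add_assoc]
    rw [this]
  have hpdlh : ∀ l h t : ℝ, pdlh (fun l h t => Real.exp (-(r * t / ω)) * W (l + c * t + d) h) l h t
      = Real.exp (-(r * t / ω)) * qdzh W (l + c * t + d) h := by
    intro l h t
    have hfun : (fun y => pdl (fun l h t => Real.exp (-(r * t / ω)) * W (l + c * t + d) h) l y t)
        = fun y => Real.exp (-(r * t / ω)) * g1 (l + c * t + d, y) := by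
      funext y
      rw [hpdl l y t, hqz]
    show deriv (fun y => pdl (fun l h t => Real.exp (-(r * t / ω)) * W (l + c * t + d) h) l y t) h = _
    rw [hfun, deriv_const_mul_field]
    have : qdzh W (l + c * t + d) h = deriv (fun y => g1 (l + c * t + d, y)) h := by
      show deriv (fun y => qdz W (l + c * t + d) y) h = _
      rw [hqzfun2 (l + c * t + d)]
    rw [this]
  have hpdhh : ∀ l h t : ℝ, pdhh (fun l h t => Real.exp (-(r * t / ω)) * W (l + c * t + d) h) l h t
      = Real.exp (-(r * t / ω)) * qdhh W (l + c * t + d) h := by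
    intro l h t
    have hfun : (fun y => pdh (fun l h t => Real.exp (-(r * t / ω)) * W (l + c * t + d) h) l y t)
        = fun y => Real.exp (-(r * t / ω)) * g2 (l + c * t + d, y) := by
      funext y
      rw [hpdh l y t, hqh]
    show deriv (fun y => pdh (fun l h t => Real.exp (-(r * t / ω)) * W (l + c * t + d) h) l y t) h = _
    rw [hfun, deriv_const_mul_field]
    have : qdhh W (l + c * t + d) h = deriv (fun y => g2 (l + c * t + d, y)) h := by
      show deriv (fun y => qdh W (l + c * t + d) y) h = _
      rw [hqhfun (l + c * t + d)]
    rw [this]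
  refine ⟨?_, ?_, ?_, ?_⟩
  · -- joint C²
    have h1 : ContDiff ℝ 2 (fun p : ℝ × ℝ × ℝ => Real.exp (-(r * p.2.2 / ω))) := by
      have : ContDiff ℝ 2 (fun p : ℝ × ℝ × ℝ => -(r * p.2.2 / ω)) := by
        fun_prop (disch := intros; exact hω)
      exact Real.contDiff_exp.comp this
    have h3 : ContDiff ℝ 2 (fun p : ℝ × ℝ × ℝ => ((p.1 + c * p.2.2 + d, p.2.1) : ℝ × ℝ)) := by
      fun_prop
    exact h1.mul (hWC.comp h3)
  · intro l h t
    rw [hpdl l h t]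
    exact mul_pos (Real.exp_pos _) (hWz _ _)
  · intro l h t
    rw [hpdll l h t]
    exact mul_neg_of_pos_of_neg (Real.exp_pos _) (hWzz _ _)
  · intro l h t
    rw [hpdl l h t, hpdh l h t, hpdt l h t, hpdll l h t, hpdhh l h t, hpdlh l h t]
    have hEpos : (0:ℝ) < Real.exp (-(r * t / ω)) := Real.exp_pos _
    have hEne : Real.exp (-(r * t / ω)) ≠ 0 := hEpos.ne'
    have hzne : qdz W (l + c * t + d) h ≠ 0 := (hWz _ _).ne'
    have hzzne : qdzz W (l + c * t + d) h ≠ 0 := (hWzz _ _).ne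
    have hσne : σ ≠ 0 := hσ.ne'
    have hane : a ≠ 0 := ha.ne'
    rw [Real.log_mul hEne hzne, Real.log_exp, Real.log_exp]
    have hfrac :
        ((α - r) ^ 2 * (Real.exp (-(r * t / ω)) * qdz W (l + c * t + d) h) ^ 2
            + 2 * (α - r) * η * ρ * h * (Real.exp (-(r * t / ω)) * qdz W (l + c * t + d) h)
              * (Real.exp (-(r * t / ω)) * qdzh W (l + c * t + d) h)
            + η ^ 2 * ρ ^ 2 * σ ^ 2 * h ^ 2
              * (Real.exp (-(r * t / ω)) * qdzh W (l + c * t + d) h) ^ 2)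
          / (2 * σ ^ 2 * (Real.exp (-(r * t / ω)) * qdzz W (l + c * t + d) h))
        = Real.exp (-(r * t / ω)) *
          (((α - r) ^ 2 * (qdz W (l + c * t + d) h) ^ 2
            + 2 * (α - r) * η * ρ * h * qdz W (l + c * t + d) h * qdzh W (l + c * t + d) h
            + η ^ 2 * ρ ^ 2 * σ ^ 2 * h ^ 2 * (qdzh W (l + c * t + d) h) ^ 2)
          / (2 * σ ^ 2 * qdzz W (l + c * t + d) h)) := by
      field_simp
    rw [hfrac]
    have hident : c - r * (c * t) - r * d - (1 / a) * (r * t / ω)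
        - (1 / a) * (1 + -(κ * t)) - Real.log a / a
        + (1 / a) * (1 / ω + 1 + Real.log a) = 0 := by
      rw [hcdef, hddef]
      field_simp
      ring
    linear_combination Real.exp (-(r * t / ω)) * hW (l + c * t + d) h
      + Real.exp (-(r * t / ω)) * qdz W (l + c * t + d) h * hident
end

section
/- Assume r ≠ 0, a > 0, κ > 0, Φ̄(t) = e^{−κ t}, and fix ε ∈ {1, −1}. Let W = W(z,h) : ℝ² → ℝ be a C² function with W_z > 0 and W_{zz} < 0 everywhere, satisfying at every point the two dimensional PDE (1/2)η²h²W_{hh} + (μ−δ)h W_h + (r z + δ h)W_z + (1/a)W_z ln W_z − ((α−r)²W_z² + 2(α−r)ηρh W_z W_{zh} + η²ρ²σ²h²W_{zh}²)/(2σ²W_{zz}) − (1/a)(1 + ln a)W_z + ε r = 0. Then V(l,h,t) := W(l + κ t/(a r) + κ/(a r²), h) + ε r t solves the EXPn–HJB equation. (This is the invariant reduction corresponding to the subalgebra h₇ = ⟨e₂ ± e₃⟩.) -/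
/-- (invariant reduction for the subalgebra `h₇ = ⟨e₂ ± e₃⟩`,
exponential liquidation time `Φ̄(t) = e^{−κt}`, `ε ∈ {1,−1}`). If `W(z,h)` is C²
with `W_z > 0`, `W_{zz} < 0`, and solves
`(1/2)η²h²W_{hh} + (μ−δ)hW_h + (rz+δh)W_z + (1/a)W_z ln W_z
 − ((α−r)²W_z² + 2(α−r)ηρh W_z W_{zh} + η²ρ²σ²h²W_{zh}²)/(2σ²W_{zz})
 − (1/a)(1 + ln a)W_z + εr = 0`,
then `V(l,h,t) = W(l + κt/(ar) + κ/(ar²), h) + εrt` solves the EXPn–HJB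
equation. -/
theorem stmt_17 (r σ η a α μ δ ρ κ ε : ℝ) (hσ : 0 < σ) (ha : 0 < a) (hr : r ≠ 0)
    (hκ : 0 < κ) (hε : ε = 1 ∨ ε = -1)
    (W : ℝ → ℝ → ℝ) (hWC : ContDiff ℝ 2 (fun p : ℝ × ℝ => W p.1 p.2))
    (hWz : ∀ z h : ℝ, 0 < qdz W z h) (hWzz : ∀ z h : ℝ, qdzz W z h < 0)
    (hW : ∀ z h : ℝ,
      (1/2) * η^2 * h^2 * qdhh W z h + (μ - δ) * h * qdh W z h
        + (r * z + δ * h) * qdz W z h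
        + (1/a) * qdz W z h * Real.log (qdz W z h)
        - ((α - r)^2 * (qdz W z h)^2
            + 2 * (α - r) * η * ρ * h * qdz W z h * qdzh W z h
            + η^2 * ρ^2 * σ^2 * h^2 * (qdzh W z h)^2) / (2 * σ^2 * qdzz W z h)
        - (1/a) * (1 + Real.log a) * qdz W z h + ε * r = 0) :
    SolvesEXPn r σ η a α μ δ ρ (fun t => Real.exp (-(κ * t)))
      (fun l h t =>
        W (l + κ * t / (a * r) + κ/(a * r^2)) h + ε * r * t) := by
  have h12 : (1 : WithTop ℕ∞) ≤ 2 := by norm_num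
  have hgd : ∀ h₀ : ℝ, Differentiable ℝ (fun x => W x h₀) := fun h₀ =>
    (hWC.differentiable (by norm_num)).comp (differentiable_id.prodMk (differentiable_const h₀))
  have shift : ∀ (g : ℝ → ℝ) (A B x : ℝ),
      deriv (fun y => g (y + A + B)) x = deriv g (x + A + B) := by
    intro g A B x
    have h1 : (fun y => g (y + A + B)) = fun y => g (y + (A + B)) := by
      funext y; rw [add_assoc]
    rw [h1, deriv_comp_add_const, add_assoc]
  have hpdl : ∀ l h t : ℝ,
      pdl (fun l h t => W (l + κ * t / (a * r) + κ/(a * r^2)) h + ε * r * t) l h t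
        = qdz W (l + κ * t / (a * r) + κ/(a * r^2)) h := by
    intro l h t
    unfold pdl qdz
    simp only [deriv_add_const]
    exact shift (fun x => W x h) _ _ l
  have hpdll : ∀ l h t : ℝ,
      pdll (fun l h t => W (l + κ * t / (a * r) + κ/(a * r^2)) h + ε * r * t) l h t
        = qdzz W (l + κ * t / (a * r) + κ/(a * r^2)) h := by
    intro l h t
    unfold pdll qdzz
    have h1 : (fun x => pdl (fun l h t => W (l + κ * t / (a * r) + κ/(a * r^2)) h + ε * r * t) x h t)
        = fun x => qdz W (x + κ * t / (a * r) + κ/(a * r^2)) h := funext fun x => hpdl x h t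
    rw [h1]
    exact shift (fun x => qdz W x h) _ _ l
  have hpdh : ∀ l h t : ℝ,
      pdh (fun l h t => W (l + κ * t / (a * r) + κ/(a * r^2)) h + ε * r * t) l h t
        = qdh W (l + κ * t / (a * r) + κ/(a * r^2)) h := by
    intro l h t
    unfold pdh qdh
    simp only [deriv_add_const]
  have hpdhh : ∀ l h t : ℝ,
      pdhh (fun l h t => W (l + κ * t / (a * r) + κ/(a * r^2)) h + ε * r * t) l h t
        = qdhh W (l + κ * t / (a * r) + κ/(a * r^2)) h := by
    intro l h t
    unfold pdhh qdhh
    have h1 : (fun y => pdh (fun l h t => W (l + κ * t / (a * r) + κ/(a * r^2)) h + ε * r * t) l y t)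
        = fun y => qdh W (l + κ * t / (a * r) + κ/(a * r^2)) y := funext fun y => hpdh l y t
    rw [h1]
  have hpdlh : ∀ l h t : ℝ,
      pdlh (fun l h t => W (l + κ * t / (a * r) + κ/(a * r^2)) h + ε * r * t) l h t
        = qdzh W (l + κ * t / (a * r) + κ/(a * r^2)) h := by
    intro l h t
    unfold pdlh qdzh
    have h1 : (fun y => pdl (fun l h t => W (l + κ * t / (a * r) + κ/(a * r^2)) h + ε * r * t) l y t)
        = fun y => qdz W (l + κ * t / (a * r) + κ/(a * r^2)) y := funext fun y => hpdl l y t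
    rw [h1]
  have hpdt : ∀ l h t : ℝ,
      pdt (fun l h t => W (l + κ * t / (a * r) + κ/(a * r^2)) h + ε * r * t) l h t
        = qdz W (l + κ * t / (a * r) + κ/(a * r^2)) h * (κ / (a * r)) + ε * r := by
    intro l h t
    unfold pdt
    have haff : HasDerivAt (fun s : ℝ => l + κ * s / (a * r) + κ/(a * r^2)) (κ / (a * r)) t := by
      have h0 : HasDerivAt (fun s : ℝ => κ * s) (κ * 1) t := (hasDerivAt_id t).const_mul κ
      have h1 := (h0.div_const (a * r)).const_add l
      have h2 := h1.add_const (κ/(a * r^2))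
      simpa using h2
    have hg : HasDerivAt (fun x => W x h)
        (qdz W (l + κ * t / (a * r) + κ/(a * r^2)) h)
        (l + κ * t / (a * r) + κ/(a * r^2)) := ((hgd h) _).hasDerivAt
    have hcomp := hg.comp t haff
    have hlin : HasDerivAt (fun s : ℝ => ε * r * s) (ε * r) t := by
      simpa using (hasDerivAt_id t).const_mul (ε * r)
    have htot := hcomp.add hlin
    exact htot.deriv
  refine ⟨?_, ?_, ?_, ?_⟩
  · apply ContDiff.add
    · exact hWC.comp (((contDiff_fst.add ((contDiff_const.mul contDiff_snd.snd).div_const _)).add contDiff_const).prodMk contDiff_snd.fst)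
    · exact (contDiff_const.mul contDiff_snd.snd)
  · intro l h t; rw [hpdl]; exact hWz _ _
  · intro l h t; rw [hpdll]; exact hWzz _ _
  · intro l h t
    rw [hpdl, hpdll, hpdh, hpdhh, hpdlh, hpdt, Real.log_exp]
    have key := hW (l + κ * t / (a * r) + κ/(a * r^2)) h
    have hz : r * (l + κ * t / (a * r) + κ/(a * r^2)) = r * l + κ * t / a + κ / (a * r) := by
      field_simp
    rw [hz] at key
    linear_combination key
end

section
/- Assume r > 0, a > 0, κ > 0 and Φ̄(t) = e^{−κ t}. Let v : ℝ → ℝ be a C² function with v(h) < 0 for all h, satisfying at every point h the ordinary differential equation (1/2)η²h²v''(h) − (η²ρ²/2)h²(v'(h))²/v(h) + (((μ−δ)σ² − (α−r)ηρ)/σ²)·h v'(h) − (a r δ h + (α−r)²/(2σ²))·v(h) − r·v(h)·ln(−a r v(h)) = 0. Then V(l,h,t) := v(h)·e^{−a r z}, where z = l + κ t/(a r) + (1/(a r))(κ/r − 1 − ln a), solves the EXPn–HJB equation. (This is the reduction to an ODE corresponding to the two dimensional subalgebra h₈ = ⟨e₁, e₃⟩.) -/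
private lemma hasDerivE (a r κ c W t l : ℝ) :
    HasDerivAt (fun x : ℝ => W * Real.exp (-(a*r*(x + κ*t/(a*r) + c))))
      (-(a*r) * (W * Real.exp (-(a*r*(l + κ*t/(a*r) + c))))) l := by
  have h1 : HasDerivAt (fun x : ℝ => -(a*r*(x + κ*t/(a*r) + c))) (-(a*r)) l := by
    have h : HasDerivAt (fun x : ℝ => (-(a*r))*x + (-(a*r*(κ*t/(a*r)+c)))) (-(a*r)) l := by
      simpa using ((hasDerivAt_id l).const_mul (-(a*r))).add_const (-(a*r*(κ*t/(a*r)+c)))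
    have heq : (fun x : ℝ => -(a*r*(x + κ*t/(a*r) + c))) =
        fun x : ℝ => (-(a*r))*x + (-(a*r*(κ*t/(a*r)+c))) := by funext x; ring
    rw [heq]; exact h
  have h2 := (h1.exp).const_mul W
  exact h2.congr_deriv (by ring)

private lemma hasDerivT (a r κ c W t l : ℝ) (har : a * r ≠ 0) :
    HasDerivAt (fun s : ℝ => W * Real.exp (-(a*r*(l + κ*s/(a*r) + c))))
      (-κ * (W * Real.exp (-(a*r*(l + κ*t/(a*r) + c))))) t := by
  have h1 : HasDerivAt (fun s : ℝ => -(a*r*(l + κ*s/(a*r) + c))) (-κ) t := by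
    have h : HasDerivAt (fun s : ℝ => (-κ)*s + (-(a*r*(l+c)))) (-κ) t := by
      simpa using ((hasDerivAt_id t).const_mul (-κ)).add_const (-(a*r*(l+c)))
    have heq : (fun s : ℝ => -(a*r*(l + κ*s/(a*r) + c))) =
        fun s : ℝ => (-κ)*s + (-(a*r*(l+c))) := by
      funext s; rw [mul_add, mul_add, mul_div_cancel₀ _ har]; ring
    rw [heq]; exact h
  have h2 := (h1.exp).const_mul W
  exact h2.congr_deriv (by ring)

/-- (reduction to an ODE for the two dimensional subalgebra
`h₈ = ⟨e₁, e₃⟩`, exponential liquidation time `Φ̄(t) = e^{−κt}`, `r > 0`). If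
`v : ℝ → ℝ` is C² with `v < 0` and solves
`(1/2)η²h²v'' − (η²ρ²/2)h²(v')²/v + (((μ−δ)σ² − (α−r)ηρ)/σ²)hv'
 − (arδh + (α−r)²/(2σ²))v − rv ln(−arv) = 0`,
then `V(l,h,t) = v(h)·e^{−arz}` with
`z = l + κt/(ar) + (1/(ar))(κ/r − 1 − ln a)` solves the EXPn–HJB equation. -/
theorem stmt_18 (r σ η a α μ δ ρ κ : ℝ) (hσ : 0 < σ) (ha : 0 < a) (hr : 0 < r)
    (hκ : 0 < κ)
    (v : ℝ → ℝ) (hvC : ContDiff ℝ 2 v) (hvneg : ∀ h : ℝ, v h < 0)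
    (hv : ∀ h : ℝ,
      (1/2) * η^2 * h^2 * deriv (deriv v) h
        - (η^2 * ρ^2 / 2) * h^2 * (deriv v h)^2 / v h
        + (((μ - δ) * σ^2 - (α - r) * η * ρ) / σ^2) * h * deriv v h
        - (a * r * δ * h + (α - r)^2 / (2 * σ^2)) * v h
        - r * v h * Real.log (-(a * r * v h)) = 0) :
    SolvesEXPn r σ η a α μ δ ρ (fun t => Real.exp (-(κ * t)))
      (fun l h t =>
        v h * Real.exp (-(a * r *
          (l + κ * t / (a * r) + (1/(a * r)) * (κ/r - 1 - Real.log a))))) := by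
  have har : a * r ≠ 0 := by positivity
  set c : ℝ := (1/(a * r)) * (κ/r - 1 - Real.log a) with hc
  set V : ℝ → ℝ → ℝ → ℝ := fun l h t =>
      v h * Real.exp (-(a * r * (l + κ * t / (a * r) + c))) with hV
  set E : ℝ → ℝ → ℝ := fun l t => Real.exp (-(a * r * (l + κ * t / (a * r) + c))) with hE
  have hEpos : ∀ l t, 0 < E l t := fun l t => Real.exp_pos _
  have hvd : Differentiable ℝ v := hvC.differentiable (by norm_num)
  have hvC' : ContDiff ℝ 1 (deriv v) := by
    rw [show (2 : WithTop ℕ∞) = 1 + 1 by norm_num] at hvC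
    exact (contDiff_succ_iff_deriv.mp hvC).2.2
  have hvd' : Differentiable ℝ (deriv v) := hvC'.differentiable one_ne_zero
  -- partial derivative computations
  have hdl : ∀ l h t, pdl V l h t = -(a*r) * (v h * E l t) := by
    intro l h t
    exact (hasDerivE a r κ c (v h) t l).deriv
  have hdh : ∀ l h t, pdh V l h t = deriv v h * E l t := by
    intro l h t
    exact deriv_mul_const (hvd h) _
  have hdt : ∀ l h t, pdt V l h t = -κ * (v h * E l t) := by
    intro l h t
    exact (hasDerivT a r κ c (v h) t l har).deriv
  have hdll : ∀ l h t, pdll V l h t = (a*r)^2 * (v h * E l t) := by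
    intro l h t
    have heq : (fun x => pdl V x h t) = fun x => (-(a*r) * v h) * E x t := by
      funext x; rw [hdl x h t]; ring
    rw [pdll, heq]
    have := (hasDerivE a r κ c (-(a*r) * v h) t l).deriv
    rw [this]; ring
  have hdlh : ∀ l h t, pdlh V l h t = -(a*r) * (deriv v h * E l t) := by
    intro l h t
    have heq : (fun y => pdl V l y t) = fun y => v y * (-(a*r) * E l t) := by
      funext y; rw [hdl l y t]; ring
    rw [pdlh, heq, deriv_mul_const (hvd h)]; ring
  have hdhh : ∀ l h t, pdhh V l h t = deriv (deriv v) h * E l t := by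
    intro l h t
    have heq : (fun y => pdh V l y t) = fun y => deriv v y * E l t := by
      funext y; rw [hdh l y t]
    rw [pdhh, heq, deriv_mul_const (hvd' h)]
  refine ⟨?_, ?_, ?_, ?_⟩
  · show ContDiff ℝ 2 fun p : ℝ × ℝ × ℝ => v p.2.1 * Real.exp (-(a * r * (p.1 + κ * p.2.2 / (a * r) + c)))
    fun_prop (disch := intros; assumption)
  · intro l h t
    rw [hdl]
    have h1 := hvneg h
    have h2 := hEpos l t
    nlinarith [mul_pos (mul_pos ha hr) (mul_pos (neg_pos.mpr h1) h2)]
  · intro l h t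
    rw [hdll]
    have h1 := hvneg h
    have h2 := hEpos l t
    nlinarith [mul_pos (pow_pos (mul_pos ha hr) 2) (mul_pos (neg_pos.mpr h1) h2)]
  · intro l h t
    rw [hdl, hdh, hdt, hdll, hdlh, hdhh]
    have hEne : E l t ≠ 0 := (hEpos l t).ne'
    have hvne : v h ≠ 0 := (hvneg h).ne
    have hlog1 : Real.log (-(a*r) * (v h * E l t))
        = Real.log (-(a * r * v h)) + (-(a * r * (l + κ * t / (a * r) + c))) := by
      rw [show -(a*r) * (v h * E l t) = (-(a * r * v h)) * E l t by ring,
        Real.log_mul (by nlinarith [hvneg h, mul_pos ha hr]) hEne]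
      simp [hE]
    have hlog2 : Real.log (Real.exp (-(κ * t))) = -(κ * t) := Real.log_exp _
    rw [hlog1]
    simp only [hlog2]
    have key := hv h
    rw [hc]
    have hane : a ≠ 0 := ha.ne'
    have hrne : r ≠ 0 := hr.ne'
    have hσne : σ ≠ 0 := hσ.ne'
    field_simp at key ⊢
    set W := v h
    set W1 := deriv v h
    set W2 := deriv (deriv v) h
    set Ev := E l t
    apply mul_left_cancel₀ (show (2*σ^2:ℝ) ≠ 0 by positivity)
    rw [mul_zero]
    linear_combination (2 * σ^2 * Ev) * key
end

section
/- Assume r > 0, a > 0, κ > 0 and Φ̄(t) = e^{−κ t}. Let v : ℝ → ℝ be a C² function with v(h) < 0 for all h, satisfying at every point h the ordinary differential equation (1/2)η²h²v''(h) − (η²ρ²/2)h²(v'(h))²/v(h) + (((μ−δ)σ² − (α−r)ηρ)/σ²)·h v'(h) − (a r δ h + (α−r)²/(2σ²))·v(h) + r(1 + ln a)·v(h) − r·v(h)·ln(−a r v(h)) = 0. Then V(l,h,t) := v(h)·exp(−a r l − κ t − κ/r) solves the EXPn–HJB equation. (This is the reduction to an ODE corresponding to the two dimensional subalgebra h₁₂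 = ⟨e₁ + ω e₃, e₂⟩.) -/
lemma stmt19_core (r σ η a α μ δ ρ κ l h t : ℝ) (hσ : 0 < σ) (ha : 0 < a) (hr : 0 < r)
    (w w' w'' E L : ℝ) (hw : w < 0) (hE : 0 < E)
    (hv : (1/2) * η^2 * h^2 * w''
        - (η^2 * ρ^2 / 2) * h^2 * w'^2 / w
        + (((μ - δ) * σ^2 - (α - r) * η * ρ) / σ^2) * h * w'
        - (a * r * δ * h + (α - r)^2 / (2 * σ^2)) * w
        + r * (1 + Real.log a) * w
        - r * w * L = 0) :
    -κ * w * E + (1/2) * η^2 * h^2 * (w'' * E) + (r * l + δ * h) * (-(a*r) * w * E)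
      + (μ - δ) * h * (w' * E)
      - ((α - r)^2 * (-(a*r) * w * E)^2
          + 2 * (α - r) * η * ρ * h * (-(a*r) * w * E) * (-(a*r) * w' * E)
          + η^2 * ρ^2 * σ^2 * h^2 * (-(a*r) * w' * E)^2) / (2 * σ^2 * ((a*r)^2 * w * E))
      + (1/a) * (-(a*r) * w * E) * (L + (-(a * r * l) - κ * t - κ/r))
      - (1/a) * (1 + (-(κ*t))) * (-(a*r) * w * E)
      - (Real.log a / a) * (-(a*r) * w * E) = 0 := by
  have hw0 : w ≠ 0 := ne_of_lt hw
  have hE0 : E ≠ 0 := ne_of_gt hE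
  have hσ0 : σ ≠ 0 := ne_of_gt hσ
  have ha0 : a ≠ 0 := ne_of_gt ha
  have hr0 : r ≠ 0 := ne_of_gt hr
  have hvP : σ^2*w*η^2*h^2*w'' - σ^2*η^2*ρ^2*h^2*w'^2
      + 2*((μ-δ)*σ^2-(α-r)*η*ρ)*h*w'*w - 2*σ^2*w^2*(a*r*δ*h) - (α-r)^2*w^2
      + 2*σ^2*r*(1+Real.log a)*w^2 - 2*σ^2*r*w^2*L = 0 := by
    calc σ^2*w*η^2*h^2*w'' - σ^2*η^2*ρ^2*h^2*w'^2
      + 2*((μ-δ)*σ^2-(α-r)*η*ρ)*h*w'*w - 2*σ^2*w^2*(a*r*δ*h) - (α-r)^2*w^2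
      + 2*σ^2*r*(1+Real.log a)*w^2 - 2*σ^2*r*w^2*L
        = (2*σ^2*w) * ((1/2) * η^2 * h^2 * w''
          - (η^2 * ρ^2 / 2) * h^2 * w'^2 / w
          + (((μ - δ) * σ^2 - (α - r) * η * ρ) / σ^2) * h * w'
          - (a * r * δ * h + (α - r)^2 / (2 * σ^2)) * w
          + r * (1 + Real.log a) * w
          - r * w * L) := by field_simp; ring
      _ = 0 := by rw [hv]; ring
  calc -κ * w * E + (1/2) * η^2 * h^2 * (w'' * E) + (r * l + δ * h) * (-(a*r) * w * E)
      + (μ - δ) * h * (w' * E)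
      - ((α - r)^2 * (-(a*r) * w * E)^2
          + 2 * (α - r) * η * ρ * h * (-(a*r) * w * E) * (-(a*r) * w' * E)
          + η^2 * ρ^2 * σ^2 * h^2 * (-(a*r) * w' * E)^2) / (2 * σ^2 * ((a*r)^2 * w * E))
      + (1/a) * (-(a*r) * w * E) * (L + (-(a * r * l) - κ * t - κ/r))
      - (1/a) * (1 + (-(κ*t))) * (-(a*r) * w * E)
      - (Real.log a / a) * (-(a*r) * w * E)
      = (E/(2*σ^2*w)) * (σ^2*w*η^2*h^2*w'' - σ^2*η^2*ρ^2*h^2*w'^2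
      + 2*((μ-δ)*σ^2-(α-r)*η*ρ)*h*w'*w - 2*σ^2*w^2*(a*r*δ*h) - (α-r)^2*w^2
      + 2*σ^2*r*(1+Real.log a)*w^2 - 2*σ^2*r*w^2*L) := by
        field_simp
        ring
    _ = 0 := by rw [hvP]; ring

/-- (reduction to an ODE for the two dimensional subalgebra
`h₁₂ = ⟨e₁ + ω e₃, e₂⟩`, exponential liquidation time `Φ̄(t) = e^{−κt}`,
`r > 0`). If `v : ℝ → ℝ` is C² with `v < 0` and solves
`(1/2)η²h²v'' − (η²ρ²/2)h²(v')²/v + (((μ−δ)σ² − (α−r)ηρ)/σ²)hv'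
 − (arδh + (α−r)²/(2σ²))v + r(1 + ln a)v − rv ln(−arv) = 0`,
then `V(l,h,t) = v(h)·exp(−arl − κt − κ/r)` solves the EXPn–HJB equation. -/
theorem stmt_19 (r σ η a α μ δ ρ κ : ℝ) (hσ : 0 < σ) (ha : 0 < a) (hr : 0 < r)
    (hκ : 0 < κ)
    (v : ℝ → ℝ) (hvC : ContDiff ℝ 2 v) (hvneg : ∀ h : ℝ, v h < 0)
    (hv : ∀ h : ℝ,
      (1/2) * η^2 * h^2 * deriv (deriv v) h
        - (η^2 * ρ^2 / 2) * h^2 * (deriv v h)^2 / v h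
        + (((μ - δ) * σ^2 - (α - r) * η * ρ) / σ^2) * h * deriv v h
        - (a * r * δ * h + (α - r)^2 / (2 * σ^2)) * v h
        + r * (1 + Real.log a) * v h
        - r * v h * Real.log (-(a * r * v h)) = 0) :
    SolvesEXPn r σ η a α μ δ ρ (fun t => Real.exp (-(κ * t)))
      (fun l h t => v h * Real.exp (-(a * r * l) - κ * t - κ/r)) := by
  have hdv : Differentiable ℝ v := hvC.differentiable (by norm_num)
  have hdv2 : Differentiable ℝ (deriv v) := by
    have h2 : ContDiff ℝ ((1:ℕ∞)+1) v := by norm_num at hvC ⊢; exact hvC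
    exact ((contDiff_succ_iff_deriv.mp h2).2.2).differentiable (by norm_num)
  set V : ℝ → ℝ → ℝ → ℝ := fun l h t => v h * Real.exp (-(a * r * l) - κ * t - κ/r) with hV
  set E : ℝ → ℝ → ℝ := fun l t => Real.exp (-(a * r * l) - κ * t - κ/r) with hE
  have hEpos : ∀ l t : ℝ, 0 < E l t := fun l t => Real.exp_pos _
  have har : 0 < a * r := mul_pos ha hr
  -- l-derivative
  have hl : ∀ l h t : ℝ, HasDerivAt (fun x => V x h t) (-(a*r) * v h * E l t) l := by
    intro l h t
    have base : HasDerivAt (fun x : ℝ => -(a*r*x) - κ*t - κ/r) (-(a*r)) l := by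
      simpa using (((hasDerivAt_id l).const_mul (a*r)).neg.sub_const (κ*t)).sub_const (κ/r)
    have := (base.exp.const_mul (v h))
    simpa [hV, hE, mul_comm, mul_assoc, mul_left_comm] using this
  have hpdl : ∀ l h t : ℝ, pdl V l h t = -(a*r) * v h * E l t := fun l h t => (hl l h t).deriv
  -- t-derivative
  have ht : ∀ l h t : ℝ, HasDerivAt (fun s => V l h s) (-κ * v h * E l t) t := by
    intro l h t
    have base : HasDerivAt (fun s : ℝ => -(a*r*l) - κ*s - κ/r) (-κ) t := by
      simpa using (((hasDerivAt_id t).const_mul κ).const_sub (-(a*r*l))).sub_const (κ/r)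
    have := (base.exp.const_mul (v h))
    simpa [hV, hE, mul_comm, mul_assoc, mul_left_comm] using this
  have hpdt : ∀ l h t : ℝ, pdt V l h t = -κ * v h * E l t := fun l h t => (ht l h t).deriv
  -- h-derivative
  have hpdh : ∀ l h t : ℝ, pdh V l h t = deriv v h * E l t := fun l h t =>
    ((hdv h).hasDerivAt.mul_const (E l t)).deriv
  -- second derivatives
  have hpdll : ∀ l h t : ℝ, pdll V l h t = (a*r)^2 * v h * E l t := by
    intro l h t
    have heq : (fun x => pdl V x h t) = fun x => -(a*r) * v h * E x t := by
      funext x; exact hpdl x h t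
    rw [pdll, heq]
    have base : HasDerivAt (fun x : ℝ => -(a*r*x) - κ*t - κ/r) (-(a*r)) l := by
      simpa using (((hasDerivAt_id l).const_mul (a*r)).neg.sub_const (κ*t)).sub_const (κ/r)
    have h2 : HasDerivAt (fun x => -(a*r) * v h * E x t) ((a*r)^2 * v h * E l t) l := by
      have := base.exp.const_mul (-(a*r) * v h)
      simpa [hE, pow_two, mul_comm, mul_assoc, mul_left_comm] using this
    exact h2.deriv
  have hpdhh : ∀ l h t : ℝ, pdhh V l h t = deriv (deriv v) h * E l t := by
    intro l h t
    have heq : (fun y => pdh V l y t) = fun y => deriv v y * E l t := by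
      funext y; exact hpdh l y t
    rw [pdhh, heq]
    exact (((hdv2 h).hasDerivAt).mul_const (E l t)).deriv
  have hpdlh : ∀ l h t : ℝ, pdlh V l h t = -(a*r) * deriv v h * E l t := by
    intro l h t
    have heq : (fun y => pdl V l y t) = fun y => -(a*r) * v y * E l t := by
      funext y; exact hpdl l y t
    rw [pdlh, heq]
    have := (((hdv h).hasDerivAt).const_mul (-(a*r))).mul_const (E l t)
    simpa [mul_assoc] using this.deriv
  refine ⟨?_, ?_, ?_, ?_⟩
  · have h1 : ContDiff ℝ 2 (fun p : ℝ × ℝ × ℝ => v p.2.1) := hvC.comp (contDiff_snd.fst)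
    have h2 : ContDiff ℝ 2 (fun p : ℝ × ℝ × ℝ => -(a*r*p.1) - κ*p.2.2 - κ/r) := by fun_prop
    exact h1.mul (Real.contDiff_exp.comp h2)
  · intro l h t
    rw [hpdl]
    have : 0 < -(a*r) * v h := by nlinarith [hvneg h]
    exact mul_pos this (hEpos l t)
  · intro l h t
    rw [hpdll]
    have : (a*r)^2 * v h < 0 := mul_neg_of_pos_of_neg (by positivity) (hvneg h)
    exact mul_neg_of_neg_of_pos this (hEpos l t)
  · intro l h t
    rw [hpdt, hpdl, hpdh, hpdhh, hpdlh, hpdll]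
    have hne : -(a * r * v h) ≠ 0 := by nlinarith [hvneg h]
    have hlog : Real.log (-(a*r) * v h * E l t)
        = Real.log (-(a * r * v h)) + (-(a * r * l) - κ * t - κ/r) := by
      rw [show -(a*r) * v h * E l t = (-(a * r * v h)) * Real.exp (-(a * r * l) - κ * t - κ/r) by
        rw [hE]; ring, Real.log_mul hne (Real.exp_ne_zero _), Real.log_exp]
    rw [hlog, show Real.log ((fun t => Real.exp (-(κ * t))) t) = -(κ*t) from Real.log_exp _]
    exact stmt19_core r σ η a α μ δ ρ κ l h t hσ ha hr (v h) (deriv v h)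
      (deriv (deriv v) h) (E l t) (Real.log (-(a * r * v h))) (hvneg h) (hEpos l t) (hv h)
end
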